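/- Let S be a semigroup and 𝓕 a family of subsets of S with the Ramsey property. Then β(𝓕) = {p ∈ βS : p ⊆ 𝓕} is a subsemigroup of (βS,·) if and only if 𝓕 satisfies: for every E ⊆ S, if there exists A ∈ 𝓕 such that for every finite H ⊆ A the set ⋂_{x ∈ H} x⁻¹E belongs to 𝓕, then E ∈ 𝓕. -/

import Mathlib

open Set

attribute [local instance] Ultrafilter.mul Ultrafilter.semigroup

/-- Key lemma: if `D` is a nonempty directed family contained in a Ramsey family `F`,
then there is an ultrafilter containing `D` and contained in `F`. -/
theorem exists_ultrafilter_of_ramsey {S : Type*} (F : Set (Set S)) (h0 : ∅ ∉ F)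
    (hup : ∀ A ∈ F, ∀ B : Set S, A ⊆ B → B ∈ F)
    (hram : ∀ A ∈ F, ∀ A₁ A₂ : Set S, A = A₁ ∪ A₂ → A₁ ∈ F ∨ A₂ ∈ F)
    (D : Set (Set S)) (hDne : D.Nonempty) (hDF : D ⊆ F)
    (hdir : ∀ C₁ ∈ D, ∀ C₂ ∈ D, ∃ C ∈ D, C ⊆ C₁ ∩ C₂) :
    ∃ p : Ultrafilter S, (∀ C ∈ D, C ∈ p) ∧ ∀ B ∈ p, B ∈ F := by
  set f : Filter S := {
    sets := {B | ∃ C ∈ D, C \ B ∉ F}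
    univ_sets := by
      obtain ⟨C, hC⟩ := hDne
      exact ⟨C, hC, by simpa using h0⟩
    sets_of_superset := by
      rintro B B' ⟨C, hC, hCB⟩ hBB'
      exact ⟨C, hC, fun h => hCB (hup _ h _ (diff_subset_diff_right hBB'))⟩
    inter_sets := by
      rintro B₁ B₂ ⟨C₁, hC₁, h₁⟩ ⟨C₂, hC₂, h₂⟩
      obtain ⟨C, hC, hsub⟩ := hdir C₁ hC₁ C₂ hC₂
      refine ⟨C, hC, fun h => ?_⟩
      rcases hram _ h (C \ B₁) (C \ B₂) (Set.diff_inter) with h' | h'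
      · exact h₁ (hup _ h' _ (diff_subset_diff_left (hsub.trans inter_subset_left)))
      · exact h₂ (hup _ h' _ (diff_subset_diff_left (hsub.trans inter_subset_right))) } with hf
  have hmemf : ∀ C ∈ D, C ∈ f := by
    intro C hC
    exact ⟨C, hC, by simpa using h0⟩
  have hNe : f.NeBot := by
    refine ⟨fun hbot => ?_⟩
    have : (∅ : Set S) ∈ f := hbot ▸ Filter.mem_bot
    obtain ⟨C, hC, hC'⟩ := this
    exact hC' (by simpa using hDF hC)
  obtain ⟨p, hp⟩ := Ultrafilter.exists_le f
  refine ⟨p, fun C hC => hp (hmemf C hC), fun B hB => ?_⟩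
  by_contra hBF
  have hcompl : Bᶜ ∈ f := by
    obtain ⟨C, hC⟩ := hDne
    refine ⟨C, hC, fun h => ?_⟩
    exact hBF (hup _ h _ (fun x hx => not_notMem.mp hx.2))
  exact (Ultrafilter.compl_mem_iff_notMem.mp (hp hcompl)) hB

/-- β(𝓕) is a subsemigroup of βS iff 𝓕 satisfies: whenever E ⊆ S and there is
A ∈ 𝓕 such that ⋂_{x ∈ H} x⁻¹E ∈ 𝓕 for every finite H ⊆ A, then E ∈ 𝓕. -/
theorem betaF_subsemigroup_iff {S : Type*} [Semigroup S] (F : Set (Set S))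
    (hne : F.Nonempty) (h0 : ∅ ∉ F)
    (hup : ∀ A ∈ F, ∀ B : Set S, A ⊆ B → B ∈ F)
    (hram : ∀ A ∈ F, ∀ A₁ A₂ : Set S, A = A₁ ∪ A₂ → A₁ ∈ F ∨ A₂ ∈ F) :
    (∀ p q : Ultrafilter S, (∀ A ∈ p, A ∈ F) → (∀ A ∈ q, A ∈ F) →
        ∀ A ∈ p * q, A ∈ F) ↔
    (∀ E : Set S, (∃ A ∈ F, ∀ H : Set S, H ⊆ A → H.Finite →
        (⋂ x ∈ H, {y : S | x * y ∈ E}) ∈ F) → E ∈ F) := by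
  constructor
  · rintro hmul E ⟨A, hA, hH⟩
    -- ultrafilter p containing A, contained in F
    obtain ⟨p, hpD, hpF⟩ := exists_ultrafilter_of_ramsey F h0 hup hram {A}
      ⟨A, rfl⟩ (by simpa using hA)
      (by intro C₁ h₁ C₂ h₂; rw [mem_singleton_iff] at h₁ h₂; exact ⟨A, rfl, by simp [h₁, h₂]⟩)
    -- ultrafilter q containing all finite intersections, contained in F
    set D : Set (Set S) := {C | ∃ H : Set S, H ⊆ A ∧ H.Finite ∧
      C = ⋂ x ∈ H, {y : S | x * y ∈ E}} with hD
    obtain ⟨q, hqD, hqF⟩ := exists_ultrafilter_of_ramsey F h0 hup hram D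
      ⟨_, ⟨∅, empty_subset _, finite_empty, rfl⟩⟩
      (by rintro C ⟨H, hHA, hHfin, rfl⟩; exact hH H hHA hHfin)
      (by
        rintro C₁ ⟨H₁, hH₁, hfin₁, rfl⟩ C₂ ⟨H₂, hH₂, hfin₂, rfl⟩
        refine ⟨_, ⟨H₁ ∪ H₂, union_subset hH₁ hH₂, hfin₁.union hfin₂, rfl⟩, ?_⟩
        rw [Set.biInter_union])
    have hE : E ∈ p * q := by
      have : ∀ᶠ m in ↑(p * q), m ∈ E := by
        rw [Ultrafilter.eventually_mul]
        have hAp : ∀ᶠ x in (p : Filter S), x ∈ A := hpD A rfl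
        filter_upwards [hAp] with x hx
        have : (⋂ x' ∈ ({x} : Set S), {y : S | x' * y ∈ E}) ∈ q :=
          hqD _ ⟨{x}, singleton_subset_iff.2 hx, finite_singleton x, rfl⟩
        simp at this; exact this
      exact this
    exact hmul p q hpF hqF E hE
  · intro hcond p q hp hq A hA
    have hB : {x | {y | x * y ∈ A} ∈ q} ∈ p := by
      have := (Ultrafilter.eventually_mul p q (· ∈ A)).mp hA
      exact this
    refine hcond A ⟨{x | {y | x * y ∈ A} ∈ q}, hp _ hB, fun H hHsub hHfin => ?_⟩
    refine hq _ ?_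
    exact (Filter.biInter_mem hHfin).mpr fun x hx => hHsub hx
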